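/- Let n ≥ 3 and let ᾱ_n be the ring endomorphism of R = ℤ[s_1^{±1},…,s_n^{±1}, t_1,…,t_n] fixing each s_i and defined by ᾱ_n(t_i) = s_n t_i + (1−s_i)((1−s_2)t_1 − (1−s_1)t_2 + t_n) for i < n and ᾱ_n(t_n) = (1−s_2)t_1 − (1−s_1)t_2 + t_n. If g ∈ M_n is such that the matrix φ(g) is fixed entrywise by ᾱ_n, then φ(g) is the identity matrix. -/

import Mathlib

set_option maxHeartbeats 2000000

open MvPolynomial
open scoped commutatorElement

abbrev LaurentRing (n : ℕ) := AddMonoidAlgebra ℤ (Fin n →₀ ℤ)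

noncomputable def sVar (n : ℕ) (i : Fin n) : LaurentRing n :=
  AddMonoidAlgebra.single (Finsupp.single i 1) 1

noncomputable def sVarInv (n : ℕ) (i : Fin n) : LaurentRing n :=
  AddMonoidAlgebra.single (-Finsupp.single i 1) 1

lemma sVar_mul_sVarInv (n : ℕ) (i : Fin n) : sVar n i * sVarInv n i = 1 := by
  rw [sVar, sVarInv, AddMonoidAlgebra.single_mul_single, add_neg_cancel, one_mul,
    AddMonoidAlgebra.one_def]

abbrev MagnusRing (n : ℕ) := MvPolynomial (Fin n) (LaurentRing n)

noncomputable def magnusUnit (n : ℕ) (i : Fin n) : (Matrix (Fin 2) (Fin 2) (MagnusRing n))ˣ where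
  val := !![C (sVar n i), X i; 0, 1]
  inv := !![C (sVarInv n i), -(C (sVarInv n i) * X i); 0, 1]
  val_inv := by
    have h : (C (sVar n i) * C (sVarInv n i) : MagnusRing n) = 1 := by
      rw [← map_mul, sVar_mul_sVarInv, map_one]
    rw [Matrix.mul_fin_two, Matrix.one_fin_two]
    have e00 : (C (sVar n i) * C (sVarInv n i) + X i * 0 : MagnusRing n) = 1 := by
      linear_combination h
    have e01 : (C (sVar n i) * -(C (sVarInv n i) * X i) + X i * 1 : MagnusRing n) = 0 := by
      linear_combination (-(X i) : MagnusRing n) * h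
    rw [e00, e01]
    norm_num
  inv_val := by
    have h : (C (sVarInv n i) * C (sVar n i) : MagnusRing n) = 1 := by
      rw [← map_mul, mul_comm, sVar_mul_sVarInv, map_one]
    rw [Matrix.mul_fin_two, Matrix.one_fin_two]
    have e00 : (C (sVarInv n i) * C (sVar n i) + -(C (sVarInv n i) * X i) * 0 :
        MagnusRing n) = 1 := by
      linear_combination h
    have e01 : (C (sVarInv n i) * X i + -(C (sVarInv n i) * X i) * 1 : MagnusRing n) = 0 := by
      ring
    rw [e00, e01]
    norm_num

section lowerTriv
variable {R : Type*} [CommRing R]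

def lowerTriv (R : Type*) [CommRing R] : Subgroup (Matrix (Fin 2) (Fin 2) R)ˣ where
  carrier := {A | A.val 1 0 = 0 ∧ A.val 1 1 = 1}
  one_mem' := ⟨by simp, by simp⟩
  mul_mem' := by
    rintro A B ⟨ha0, ha1⟩ ⟨hb0, hb1⟩
    constructor <;>
      simp [Units.val_mul, Matrix.mul_apply, Fin.sum_univ_two, ha0, ha1, hb0, hb1]
  inv_mem' := by
    rintro A ⟨h0, h1⟩
    have key : ∀ j, A.inv 1 j = (1 : Matrix (Fin 2) (Fin 2) R) 1 j := by
      intro j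
      have h : (A.val * A.inv) 1 j = (1 : Matrix (Fin 2) (Fin 2) R) 1 j := by
        rw [A.val_inv]
      rwa [Matrix.mul_apply, Fin.sum_univ_two, h0, h1, zero_mul, one_mul, zero_add] at h
    exact ⟨by simpa using key 0, by simpa using key 1⟩

lemma mem_lowerTriv {A : (Matrix (Fin 2) (Fin 2) R)ˣ} :
    A ∈ lowerTriv R ↔ A.val 1 0 = 0 ∧ A.val 1 1 = 1 := Iff.rfl

lemma lowerTriv_mul_apply_zero_zero {A B : (Matrix (Fin 2) (Fin 2) R)ˣ}
    (hB : B ∈ lowerTriv R) :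
    (A * B).val 0 0 = A.val 0 0 * B.val 0 0 := by
  obtain ⟨hb0, -⟩ := mem_lowerTriv.mp hB
  simp [Units.val_mul, Matrix.mul_apply, Fin.sum_univ_two, hb0]

lemma lowerTriv_inv_zero_zero {A : (Matrix (Fin 2) (Fin 2) R)ˣ}
    (hA : A ∈ lowerTriv R) :
    A.val 0 0 * (A⁻¹).val 0 0 = 1 := by
  have h := lowerTriv_mul_apply_zero_zero (A := A) (B := A⁻¹) ((lowerTriv R).inv_mem hA)
  rw [mul_inv_cancel] at h
  simpa using h.symm

def upperUni (R : Type*) [CommRing R] : Subgroup (Matrix (Fin 2) (Fin 2) R)ˣ where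
  carrier := {A | A.val 0 0 = 1 ∧ A.val 1 0 = 0 ∧ A.val 1 1 = 1}
  one_mem' := ⟨by simp, by simp, by simp⟩
  mul_mem' := by
    rintro A B ⟨ha, ha0, ha1⟩ ⟨hb, hb0, hb1⟩
    refine ⟨?_, ?_, ?_⟩ <;>
      simp [Units.val_mul, Matrix.mul_apply, Fin.sum_univ_two, ha, ha0, ha1, hb, hb0, hb1]
  inv_mem' := by
    rintro A ⟨ha, ha0, ha1⟩
    have hmem : A ∈ lowerTriv R := ⟨ha0, ha1⟩
    obtain ⟨h0, h1⟩ := mem_lowerTriv.mp ((lowerTriv R).inv_mem hmem)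
    have h := lowerTriv_inv_zero_zero hmem
    rw [ha, one_mul] at h
    exact ⟨h, h0, h1⟩

lemma mem_upperUni {A : (Matrix (Fin 2) (Fin 2) R)ˣ} :
    A ∈ upperUni R ↔ A.val 0 0 = 1 ∧ A.val 1 0 = 0 ∧ A.val 1 1 = 1 := Iff.rfl

lemma upperUni_comm {A B : (Matrix (Fin 2) (Fin 2) R)ˣ}
    (hA : A ∈ upperUni R) (hB : B ∈ upperUni R) : A * B = B * A := by
  obtain ⟨ha, ha0, ha1⟩ := mem_upperUni.mp hA
  obtain ⟨hb, hb0, hb1⟩ := mem_upperUni.mp hB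
  ext : 1
  rw [Units.val_mul, Units.val_mul, Matrix.eta_fin_two A.val, Matrix.eta_fin_two B.val,
    ha, ha0, ha1, hb, hb0, hb1, Matrix.mul_fin_two, Matrix.mul_fin_two]
  ring_nf

lemma commutator_mem_upperUni {A B : (Matrix (Fin 2) (Fin 2) R)ˣ}
    (hA : A ∈ lowerTriv R) (hB : B ∈ lowerTriv R) : ⁅A, B⁆ ∈ upperUni R := by
  have hAi := (lowerTriv R).inv_mem hA
  have hBi := (lowerTriv R).inv_mem hB
  have hmem : ⁅A, B⁆ ∈ lowerTriv R :=
    Subgroup.mul_mem _ (Subgroup.mul_mem _ (Subgroup.mul_mem _ hA hB) hAi) hBi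
  obtain ⟨hc0, hc1⟩ := mem_lowerTriv.mp hmem
  refine mem_upperUni.mpr ⟨?_, hc0, hc1⟩
  show (A * B * A⁻¹ * B⁻¹).val 0 0 = 1
  rw [lowerTriv_mul_apply_zero_zero hBi, lowerTriv_mul_apply_zero_zero hAi,
    lowerTriv_mul_apply_zero_zero hB]
  have h1 := lowerTriv_inv_zero_zero hA
  have h2 := lowerTriv_inv_zero_zero hB
  calc A.val 0 0 * B.val 0 0 * (A⁻¹).val 0 0 * (B⁻¹).val 0 0
      = (A.val 0 0 * (A⁻¹).val 0 0) * (B.val 0 0 * (B⁻¹).val 0 0) := by ring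
    _ = 1 := by rw [h1, h2, one_mul]

lemma derivedSeries_two_map_eq_one {G : Type*} [Group G]
    (f : G →* (Matrix (Fin 2) (Fin 2) R)ˣ) (hf : ∀ g, f g ∈ lowerTriv R) :
    ∀ x ∈ derivedSeries G 2, f x = 1 := by
  have h1 : derivedSeries G 1 ≤ (upperUni R).comap f := by
    have e : derivedSeries G 1 = ⁅derivedSeries G 0, derivedSeries G 0⁆ :=
      derivedSeries_succ G 0
    rw [e, Subgroup.commutator_le]
    intro g _ h _
    simp only [Subgroup.mem_comap, map_commutatorElement]
    exact commutator_mem_upperUni (hf g) (hf h)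
  have h2 : derivedSeries G 2 ≤ f.ker := by
    have e : derivedSeries G 2 = ⁅derivedSeries G 1, derivedSeries G 1⁆ :=
      derivedSeries_succ G 1
    rw [e, Subgroup.commutator_le]
    intro g hg h hh
    rw [MonoidHom.mem_ker, map_commutatorElement, commutatorElement_eq_one_iff_mul_comm]
    exact upperUni_comm (h1 hg) (h1 hh)
  exact fun x hx => h2 hx

end lowerTriv

abbrev FreeMetabelian (n : ℕ) :=
  FreeGroup (Fin n) ⧸ derivedSeries (FreeGroup (Fin n)) 2

instance (n : ℕ) : (derivedSeries (FreeGroup (Fin n)) 2).Normal :=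
  derivedSeries_normal _ _

def gen (n : ℕ) (i : Fin n) : FreeMetabelian n :=
  QuotientGroup.mk (FreeGroup.of i)

/-- The Magnus representation on the free group. -/
noncomputable def magnusFree (n : ℕ) :
    FreeGroup (Fin n) →* (Matrix (Fin 2) (Fin 2) (MagnusRing n))ˣ :=
  FreeGroup.lift (magnusUnit n)

lemma magnusFree_mem_lowerTriv (n : ℕ) (g : FreeGroup (Fin n)) :
    magnusFree n g ∈ lowerTriv (MagnusRing n) := by
  refine FreeGroup.range_lift_le (s := lowerTriv (MagnusRing n)) ?_ ⟨g, rfl⟩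
  rintro A ⟨i, rfl⟩
  exact ⟨by simp [magnusUnit], by simp [magnusUnit]⟩

/-- The Magnus representation of the free metabelian group. -/
noncomputable def Magnus (n : ℕ) :
    FreeMetabelian n →* (Matrix (Fin 2) (Fin 2) (MagnusRing n))ˣ :=
  QuotientGroup.lift (derivedSeries (FreeGroup (Fin n)) 2) (magnusFree n)
    (derivedSeries_two_map_eq_one (magnusFree n) (magnusFree_mem_lowerTriv n))

/-- The Laurent monomial `s₁^{j₁} ⋯ sₙ^{jₙ}` with exponent vector `j`. -/
noncomputable def sMonomial (n : ℕ) (j : Fin n →₀ ℤ) : LaurentRing n :=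
  AddMonoidAlgebra.single j 1


/-- The polynomial `w = (1 - s₂) t₁ - (1 - s₁) t₂ + tₙ`. -/
noncomputable def wPoly (n : ℕ) (hn : 3 ≤ n) : MagnusRing n :=
  (1 - C (sVar n ⟨1, by omega⟩)) * X ⟨0, by omega⟩
    - (1 - C (sVar n ⟨0, by omega⟩)) * X ⟨1, by omega⟩ + X ⟨n - 1, by omega⟩

/-- The ring endomorphism `ᾱₙ` of `R = ℤ[s^{±1}, t]`: it fixes the Laurent coefficients
(hence each `sᵢ`), sends `tᵢ` to `sₙ tᵢ + (1 - sᵢ)((1 - s₂) t₁ - (1 - s₁) t₂ + tₙ)` for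
`i < n`, and sends `tₙ` to `(1 - s₂) t₁ - (1 - s₁) t₂ + tₙ`. -/
noncomputable def alphaBar (n : ℕ) (hn : 3 ≤ n) : MagnusRing n →+* MagnusRing n :=
  (MvPolynomial.aeval (R := LaurentRing n) (fun i : Fin n =>
      if (i : ℕ) < n - 1 then
        C (sVar n ⟨n - 1, by omega⟩) * X i + (1 - C (sVar n i)) * wPoly n hn
      else wPoly n hn) :
    MagnusRing n →ₐ[LaurentRing n] MagnusRing n).toRingHom


/-! ### Auxiliary development for the main theorem -/

section MagnusAux

open Finsupp in
lemma coeff_X_single {n : ℕ} (j k : Fin n) :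
    coeff (Finsupp.single k 1) (X j : MagnusRing n) = if j = k then 1 else 0 := by
  rw [coeff_X']
  by_cases h : j = k
  · subst h; simp
  · rw [if_neg h, if_neg]
    rw [Finsupp.single_left_inj (one_ne_zero)]
    exact h

lemma sum_C_coeff {n : ℕ} (f : Fin n → LaurentRing n) (k : Fin n) :
    coeff (Finsupp.single k 1) (∑ j : Fin n, C (f j) * X j) = f k := by
  rw [coeff_sum]
  rw [Finset.sum_congr rfl (fun j _ => by rw [coeff_C_mul, coeff_X_single])]
  simp [mul_ite, Finset.sum_ite_eq']

lemma span_reconstruct {n : ℕ} {p : MagnusRing n}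
    (hp : p ∈ Submodule.span (LaurentRing n) (Set.range (X : Fin n → MagnusRing n))) :
    p = ∑ j : Fin n, C (coeff (Finsupp.single j 1) p) * X j := by
  induction hp using Submodule.span_induction with
  | mem x hx =>
    obtain ⟨i, rfl⟩ := hx
    rw [Finset.sum_congr rfl (fun j _ => by rw [coeff_X_single i j])]
    rw [Finset.sum_congr rfl (fun j (_ : j ∈ Finset.univ) => by
      rw [show (C (if i = j then (1:LaurentRing n) else 0) * X j)
        = if i = j then X j else 0 by split <;> simp])]
    simp
  | zero => simp
  | add x y hx hy ihx ihy =>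
    conv_lhs => rw [ihx, ihy]
    rw [← Finset.sum_add_distrib]
    refine Finset.sum_congr rfl fun j _ => ?_
    rw [coeff_add, map_add, add_mul]
  | smul r x hx ih =>
    conv_lhs => rw [ih]
    rw [Finset.smul_sum]
    refine Finset.sum_congr rfl fun j _ => ?_
    rw [coeff_smul, smul_eq_mul, map_mul, smul_eq_C_mul]
    ring

/-- The Fox evaluation `tᵢ ↦ sᵢ - 1`. -/
noncomputable def eFox (n : ℕ) : MagnusRing n →ₐ[LaurentRing n] LaurentRing n :=
  aeval (fun i => sVar n i - 1)

lemma eFox_C (n : ℕ) (r : LaurentRing n) : eFox n (C r) = r := by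
  rw [eFox, ← MvPolynomial.algebraMap_eq, AlgHom.commutes]
  rfl

lemma eFox_X (n : ℕ) (i : Fin n) : eFox n (X i) = sVar n i - 1 := by
  rw [eFox, aeval_X]

lemma sMonomial_zero (n : ℕ) : sMonomial n 0 = 1 := (AddMonoidAlgebra.one_def).symm

lemma sMonomial_add (n : ℕ) (a b : Fin n →₀ ℤ) :
    sMonomial n (a + b) = sMonomial n a * sMonomial n b := by
  rw [sMonomial, sMonomial, sMonomial, AddMonoidAlgebra.single_mul_single, one_mul]

lemma sMonomial_mul_neg (n : ℕ) (a : Fin n →₀ ℤ) :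
    sMonomial n a * sMonomial n (-a) = 1 := by
  rw [← sMonomial_add, add_neg_cancel, sMonomial_zero]

/-- The subgroup of matrices of the Magnus shape, with monomial corner, linear upper
entry, and the Fox identity. -/
noncomputable def goodSet (n : ℕ) : Subgroup (Matrix (Fin 2) (Fin 2) (MagnusRing n))ˣ where
  carrier := {A | ∃ m : Fin n →₀ ℤ, A.val 0 0 = C (sMonomial n m) ∧
    A.val 0 1 ∈ Submodule.span (LaurentRing n) (Set.range (X : Fin n → MagnusRing n)) ∧
    eFox n (A.val 0 1) = sMonomial n m - 1 ∧ A.val 1 0 = 0 ∧ A.val 1 1 = 1}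
  one_mem' := by
    refine ⟨0, ?_, ?_, ?_, ?_, ?_⟩ <;>
      simp [sMonomial_zero]
  mul_mem' := by
    rintro A B ⟨ma, ha00, haspan, hafox, ha10, ha11⟩ ⟨mb, hb00, hbspan, hbfox, hb10, hb11⟩
    have h00 : (A * B).val 0 0 = C (sMonomial n (ma + mb)) := by
      simp [Units.val_mul, Matrix.mul_apply, Fin.sum_univ_two, ha00, hb00, hb10,
        sMonomial_add, map_mul]
    have h01 : (A * B).val 0 1 = C (sMonomial n ma) * B.val 0 1 + A.val 0 1 := by
      simp [Units.val_mul, Matrix.mul_apply, Fin.sum_univ_two, ha00, hb11]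
    refine ⟨ma + mb, h00, ?_, ?_, ?_, ?_⟩
    · rw [h01, ← smul_eq_C_mul]
      exact Submodule.add_mem _ (Submodule.smul_mem _ _ hbspan) haspan
    · rw [h01, map_add, map_mul, eFox_C, hafox, hbfox, sMonomial_add]
      ring
    · simp [Units.val_mul, Matrix.mul_apply, Fin.sum_univ_two, ha10, ha11, hb10]
    · simp [Units.val_mul, Matrix.mul_apply, Fin.sum_univ_two, ha10, ha11, hb10, hb11]
  inv_mem' := by
    rintro A ⟨m, h00, hspan, hfox, h10, h11⟩
    have hAlt : A ∈ lowerTriv (MagnusRing n) := ⟨h10, h11⟩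
    obtain ⟨hi10, hi11⟩ := mem_lowerTriv.mp ((lowerTriv (MagnusRing n)).inv_mem hAlt)
    have hmul : C (sMonomial n m) * (C (sMonomial n (-m)) : MagnusRing n) = 1 := by
      rw [← map_mul, sMonomial_mul_neg, map_one]
    have hii : A.val 0 0 * (A⁻¹).val 0 0 = 1 := lowerTriv_inv_zero_zero hAlt
    rw [h00] at hii
    have hi00 : (A⁻¹).val 0 0 = C (sMonomial n (-m)) := by
      calc (A⁻¹).val 0 0 = (C (sMonomial n (-m)) * C (sMonomial n m)) * (A⁻¹).val 0 0 := by
            rw [mul_comm (C (sMonomial n (-m))), hmul, one_mul]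
        _ = C (sMonomial n (-m)) * (C (sMonomial n m) * (A⁻¹).val 0 0) := by ring
        _ = C (sMonomial n (-m)) := by rw [hii, mul_one]
    have hprod : (A.val * (A⁻¹).val) 0 1 = 0 := by
      have : A.val * (A⁻¹).val = 1 := by
        rw [← Units.val_mul, mul_inv_cancel, Units.val_one]
      rw [this]
      simp
    rw [Matrix.mul_apply, Fin.sum_univ_two, hi11, h00, mul_one] at hprod
    have hi01 : (A⁻¹).val 0 1 = - (C (sMonomial n (-m)) * A.val 0 1) := by
      have h1 : C (sMonomial n m) * (A⁻¹).val 0 1 = - A.val 0 1 := by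
        linear_combination hprod
      calc (A⁻¹).val 0 1
          = (C (sMonomial n (-m)) * C (sMonomial n m)) * (A⁻¹).val 0 1 := by
            rw [mul_comm (C (sMonomial n (-m))), hmul, one_mul]
        _ = C (sMonomial n (-m)) * (C (sMonomial n m) * (A⁻¹).val 0 1) := by ring
        _ = - (C (sMonomial n (-m)) * A.val 0 1) := by rw [h1]; ring
    refine ⟨-m, hi00, ?_, ?_, hi10, hi11⟩
    · rw [hi01, ← smul_eq_C_mul]
      exact Submodule.neg_mem _ (Submodule.smul_mem _ _ hspan)
    · rw [hi01, map_neg, map_mul, eFox_C, hfox]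
      have := sMonomial_mul_neg n m
      linear_combination -this

lemma magnus_mem_goodSet (n : ℕ) (g : FreeMetabelian n) : Magnus n g ∈ goodSet n := by
  obtain ⟨x, rfl⟩ := QuotientGroup.mk_surjective g
  have hx : magnusFree n x ∈ goodSet n := by
    refine FreeGroup.range_lift_le (s := goodSet n) ?_ ⟨x, rfl⟩
    rintro A ⟨i, rfl⟩
    refine ⟨Finsupp.single i 1, ?_, ?_, ?_, ?_, ?_⟩
    · show (magnusUnit n i).val 0 0 = _
      simp [magnusUnit, sMonomial, sVar]
    · show (magnusUnit n i).val 0 1 ∈ _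
      simp only [magnusUnit, Matrix.cons_val', Matrix.cons_val_zero, Matrix.cons_val_one,
        Matrix.head_cons, Matrix.empty_val', Matrix.cons_val_fin_one, Matrix.head_fin_const]
      exact Submodule.subset_span ⟨i, rfl⟩
    · show eFox n ((magnusUnit n i).val 0 1) = _
      have : (magnusUnit n i).val 0 1 = X i := by simp [magnusUnit]
      rw [this, eFox_X]
      rfl
    · show (magnusUnit n i).val 1 0 = 0
      simp [magnusUnit]
    · show (magnusUnit n i).val 1 1 = 1
      simp [magnusUnit]
  show QuotientGroup.lift _ _ _ _ ∈ _
  exact hx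


noncomputable def Dhom (n : ℕ) (i : Fin n) : LaurentRing n →ₐ[ℤ] AddMonoidAlgebra ℤ ℤ :=
  AddMonoidAlgebra.lift ℤ (AddMonoidAlgebra ℤ ℤ) (Fin n →₀ ℤ)
    { toFun := fun x => AddMonoidAlgebra.single (Multiplicative.toAdd x i) 1
      map_one' := by
        show AddMonoidAlgebra.single ((0 : Fin n →₀ ℤ) i) 1 = 1
        rw [Finsupp.zero_apply]
        exact (AddMonoidAlgebra.one_def).symm
      map_mul' := fun x y => by
        show AddMonoidAlgebra.single ((Multiplicative.toAdd x + Multiplicative.toAdd y) i) 1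
          = AddMonoidAlgebra.single (Multiplicative.toAdd x i) 1
            * AddMonoidAlgebra.single (Multiplicative.toAdd y i) 1
        rw [AddMonoidAlgebra.single_mul_single, one_mul, Finsupp.add_apply] }

lemma Dhom_single (n : ℕ) (i : Fin n) (m : Fin n →₀ ℤ) :
    Dhom n i (AddMonoidAlgebra.single m 1) = AddMonoidAlgebra.single (m i) 1 := by
  rw [Dhom, AddMonoidAlgebra.lift_single, one_smul]
  rfl

noncomputable def Phi (n : ℕ) (i : Fin n) : LaurentRing n →ₐ[ℤ] DualNumber ℤ :=
  AddMonoidAlgebra.lift ℤ (DualNumber ℤ) (Fin n →₀ ℤ)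
    { toFun := fun x => 1 + (Multiplicative.toAdd x i : ℤ) • (DualNumber.eps : DualNumber ℤ)
      map_one' := by
        show 1 + ((0 : Fin n →₀ ℤ) i : ℤ) • (DualNumber.eps : DualNumber ℤ) = 1
        rw [Finsupp.zero_apply, zero_smul, add_zero]
      map_mul' := fun x y => by
        show 1 + ((Multiplicative.toAdd x + Multiplicative.toAdd y) i : ℤ) •
            (DualNumber.eps : DualNumber ℤ) = _
        have h : ((Multiplicative.toAdd x i : ℤ) • (DualNumber.eps : DualNumber ℤ)) *
            ((Multiplicative.toAdd y i : ℤ) • (DualNumber.eps : DualNumber ℤ)) = 0 := by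
          rw [smul_mul_smul_comm, DualNumber.eps_mul_eps, smul_zero]
        rw [Finsupp.add_apply, add_smul]
        show _ = (1 + _) * (1 + _)
        rw [mul_add, add_mul, add_mul, h]
        ring }

lemma Phi_single (n : ℕ) (i : Fin n) (m : Fin n →₀ ℤ) :
    Phi n i (AddMonoidAlgebra.single m 1)
      = 1 + (m i : ℤ) • (DualNumber.eps : DualNumber ℤ) := by
  rw [Phi, AddMonoidAlgebra.lift_single, one_smul]
  rfl

noncomputable def augA : AddMonoidAlgebra ℤ ℤ →ₐ[ℤ] ℤ :=
  AddMonoidAlgebra.lift ℤ ℤ ℤ 1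

lemma augA_single (a : ℤ) : augA (AddMonoidAlgebra.single a 1) = 1 := by
  rw [augA, AddMonoidAlgebra.lift_single, one_smul]
  rfl

lemma fst_comp_Phi (n : ℕ) (i j : Fin n) :
    (TrivSqZeroExt.fstHom ℤ ℤ ℤ).comp (Phi n i) = augA.comp (Dhom n j) := by
  apply AddMonoidAlgebra.algHom_ext
  intro x
  simp only [AlgHom.comp_apply, Phi_single, Dhom_single, augA_single]
  show (1 + x i • (DualNumber.eps : DualNumber ℤ)).fst = 1
  rw [TrivSqZeroExt.fst_add, TrivSqZeroExt.fst_one, TrivSqZeroExt.fst_smul, DualNumber.fst_eps, smul_zero, add_zero]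
  exact Subsingleton.elim _ _

lemma alphaBar_C {n : ℕ} (hn : 3 ≤ n) (r : LaurentRing n) :
    alphaBar n hn (C r) = C r := by
  simp only [alphaBar, AlgHom.toRingHom_eq_coe, RingHom.coe_coe, aeval_C,
    MvPolynomial.algebraMap_eq]

lemma alphaBar_X {n : ℕ} (hn : 3 ≤ n) (j : Fin n) :
    alphaBar n hn (X j)
      = if (j : ℕ) < n - 1 then
          C (sVar n ⟨n - 1, by omega⟩) * X j + (1 - C (sVar n j)) * wPoly n hn
        else wPoly n hn := by
  simp only [alphaBar, AlgHom.toRingHom_eq_coe, RingHom.coe_coe, aeval_X]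

lemma coeff_relations {n : ℕ} (hn : 3 ≤ n) (b : MagnusRing n) (c : Fin n → LaurentRing n)
    (lam : LaurentRing n)
    (hbsum : b = ∑ j : Fin n, C (c j) * X j)
    (hlam : lam = ∑ j : Fin n, c j * (if (j : ℕ) < n - 1 then 1 - sVar n j else 1))
    (halpha : alphaBar n hn b = b) (k : Fin n) :
    c k = sVar n ⟨n - 1, by omega⟩ * (if (k : ℕ) < n - 1 then c k else 0)
      + lam * coeff (Finsupp.single k 1) (wPoly n hn) := by
  have hClam : (C lam : MagnusRing n)
      = ∑ j : Fin n, C (c j * (if (j : ℕ) < n - 1 then 1 - sVar n j else 1)) := by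
    rw [hlam, map_sum]
  have hexp : alphaBar n hn b
      = C (sVar n ⟨n - 1, by omega⟩)
          * (∑ j : Fin n, if (j : ℕ) < n - 1 then C (c j) * X j else 0)
        + C lam * wPoly n hn := by
    conv_lhs => rw [hbsum]
    rw [map_sum, hClam, Finset.sum_mul, Finset.mul_sum, ← Finset.sum_add_distrib]
    refine Finset.sum_congr rfl fun j _ => ?_
    rw [map_mul (alphaBar n hn), alphaBar_C hn, alphaBar_X hn]
    by_cases hj : (j : ℕ) < n - 1
    · rw [if_pos hj, if_pos hj, if_pos hj, map_mul, map_sub, map_one]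
      ring
    · rw [if_neg hj, if_neg hj, if_neg hj, map_mul, map_one]
      ring
  have hb2 : b = C (sVar n ⟨n - 1, by omega⟩)
      * (∑ j : Fin n, if (j : ℕ) < n - 1 then C (c j) * X j else 0)
      + C lam * wPoly n hn := halpha.symm.trans hexp
  have h := congrArg (coeff (Finsupp.single k 1)) hb2
  conv_lhs at h => rw [hbsum]
  rw [sum_C_coeff, coeff_add, coeff_C_mul, coeff_C_mul, coeff_sum] at h
  rw [Finset.sum_congr rfl (fun j (_ : j ∈ Finset.univ) => by
    rw [apply_ite (coeff (Finsupp.single k 1)), coeff_C_mul, coeff_X_single,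
      coeff_zero])] at h
  rw [Finset.sum_eq_single k (fun j _ hj => by simp [hj]) (by simp)] at h
  simpa using h

end MagnusAux

/-- If the Magnus matrix of `g` is fixed entrywise by `ᾱₙ`, then it is the identity
matrix. -/
theorem magnus_matrix_fixed_by_alphaBar_eq_one (n : ℕ) (hn : 3 ≤ n) (g : FreeMetabelian n)
    (hfix : (Magnus n g : Matrix (Fin 2) (Fin 2) (MagnusRing n)).map (alphaBar n hn) =
      (Magnus n g : Matrix (Fin 2) (Fin 2) (MagnusRing n))) :
    (Magnus n g : Matrix (Fin 2) (Fin 2) (MagnusRing n)) = 1 := by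
  obtain ⟨m, h00, hspan, hfox, h10, h11⟩ := magnus_mem_goodSet n g
  set b : MagnusRing n := (Magnus n g : Matrix (Fin 2) (Fin 2) (MagnusRing n)) 0 1 with hbdef
  have hbsum : b = ∑ j : Fin n,
      C (coeff (Finsupp.single j 1) b) * X j := span_reconstruct hspan
  set c : Fin n → LaurentRing n := fun j => coeff (Finsupp.single j 1) b with hcdef
  set lam : LaurentRing n :=
    ∑ j : Fin n, c j * (if (j : ℕ) < n - 1 then 1 - sVar n j else 1) with hlamdef
  have halpha : alphaBar n hn b = b := by
    have h := congrFun (congrFun hfix 0) 1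
    rw [Matrix.map_apply] at h
    exact h
  have hkey : ∀ k : Fin n,
      c k = sVar n ⟨n - 1, by omega⟩ * (if (k : ℕ) < n - 1 then c k else 0)
        + lam * coeff (Finsupp.single k 1) (wPoly n hn) :=
    coeff_relations hn b c lam hbsum hlamdef halpha
  -- coefficients of wPoly
  have hw1 : coeff (Finsupp.single (⟨n - 1, by omega⟩ : Fin n) 1) (wPoly n hn) = 1 := by
    rw [wPoly, coeff_add, sub_mul, sub_mul, one_mul, one_mul, coeff_sub, coeff_sub,
      coeff_sub, coeff_C_mul, coeff_C_mul, coeff_X_single, coeff_X_single, coeff_X_single]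
    rw [if_neg (show (⟨0, by omega⟩ : Fin n) ≠ ⟨n - 1, by omega⟩ from by
        simp only [ne_eq, Fin.mk.injEq]; omega),
      if_neg (show (⟨1, by omega⟩ : Fin n) ≠ ⟨n - 1, by omega⟩ from by
        simp only [ne_eq, Fin.mk.injEq]; omega),
      if_pos rfl]
    ring
  have hw0 : coeff (Finsupp.single (⟨0, by omega⟩ : Fin n) 1) (wPoly n hn)
      = 1 - sVar n ⟨1, by omega⟩ := by
    rw [wPoly, coeff_add, sub_mul, sub_mul, one_mul, one_mul, coeff_sub, coeff_sub,
      coeff_sub, coeff_C_mul, coeff_C_mul, coeff_X_single, coeff_X_single, coeff_X_single]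
    rw [if_pos rfl,
      if_neg (show (⟨1, by omega⟩ : Fin n) ≠ ⟨0, by omega⟩ from by
        simp only [ne_eq, Fin.mk.injEq]; omega),
      if_neg (show (⟨n - 1, by omega⟩ : Fin n) ≠ ⟨0, by omega⟩ from by
        simp only [ne_eq, Fin.mk.injEq]; omega)]
    ring
  have heqlast : c ⟨n - 1, by omega⟩ = lam := by
    have h := hkey ⟨n - 1, by omega⟩
    rw [hw1, if_neg (show ¬ ((⟨n - 1, by omega⟩ : Fin n) : ℕ) < n - 1 from by
      simp only [not_lt]
      exact Nat.le_refl _), mul_zero, zero_add, mul_one] at h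
    exact h
  have heq0 : c ⟨0, by omega⟩ = sVar n ⟨n - 1, by omega⟩ * c ⟨0, by omega⟩
      + lam * (1 - sVar n ⟨1, by omega⟩) := by
    have h := hkey ⟨0, by omega⟩
    rw [hw0, if_pos (show ((⟨0, by omega⟩ : Fin n) : ℕ) < n - 1 from by
      simp only; omega)] at h
    exact h
  -- the Fox identity
  have hfoxsum : ∑ j : Fin n, c j * (sVar n j - 1) = sMonomial n m - 1 := by
    rw [← hfox]
    conv_rhs => rw [hbsum]
    rw [map_sum]
    exact Finset.sum_congr rfl fun j _ => by rw [map_mul, eFox_C, eFox_X]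
  have hI : sMonomial n m - 1 = lam * (sVar n ⟨n - 1, by omega⟩ - 1) := by
    have h2 : (∑ j : Fin n, c j * (sVar n j - 1)) + lam
        = c ⟨n - 1, by omega⟩ * sVar n ⟨n - 1, by omega⟩ := by
      rw [hlamdef, ← Finset.sum_add_distrib]
      rw [Finset.sum_congr rfl (fun j (_ : j ∈ Finset.univ) =>
        show c j * (sVar n j - 1) + c j * (if (j : ℕ) < n - 1 then 1 - sVar n j else 1)
          = if (j : ℕ) < n - 1 then 0 else c j * sVar n j from by split <;> ring)]
      rw [Finset.sum_eq_single (⟨n - 1, by omega⟩ : Fin n) (fun j _ hj => by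
        rw [if_pos]
        have h1 := j.isLt
        have h2 : (j : ℕ) ≠ n - 1 := fun hc => hj (Fin.ext (by simpa using hc))
        omega) (by simp)]
      rw [if_neg (by simp only [not_lt]; exact Nat.le_refl _)]
    rw [heqlast] at h2
    linear_combination h2 - hfoxsum
  -- Laurent ring computations
  have hDsvar : ∀ (i j : Fin n), Dhom n i (sVar n j)
      = AddMonoidAlgebra.single (if j = i then (1 : ℤ) else 0) 1 := fun i j => by
    rw [sVar, Dhom_single, Finsupp.single_apply]
  have hne : (1 - AddMonoidAlgebra.single (1 : ℤ) (1 : ℤ) : AddMonoidAlgebra ℤ ℤ) ≠ 0 := by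
    intro hcon
    have h1 : (AddMonoidAlgebra.single (1 : ℤ) (1 : ℤ) : AddMonoidAlgebra ℤ ℤ)
        = AddMonoidAlgebra.single (0 : ℤ) (1 : ℤ) := by
      rw [← AddMonoidAlgebra.one_def]
      exact (sub_eq_zero.mp hcon).symm
    rcases AddMonoidAlgebra.single_inj.mp h1 with ⟨h, -⟩ | ⟨h, -⟩
    · exact one_ne_zero h
    · exact one_ne_zero h
  have hD1lam : Dhom n ⟨1, by omega⟩ lam = 0 := by
    have h := congrArg (Dhom n ⟨1, by omega⟩) heq0
    rw [map_add, map_mul, map_mul, map_sub, map_one, hDsvar, hDsvar] at h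
    rw [if_neg (show (⟨n - 1, by omega⟩ : Fin n) ≠ ⟨1, by omega⟩ from by
        simp only [ne_eq, Fin.mk.injEq]; omega), if_pos rfl,
      ← AddMonoidAlgebra.one_def, one_mul] at h
    have h2 : Dhom n ⟨1, by omega⟩ lam
        * (1 - AddMonoidAlgebra.single (1 : ℤ) (1 : ℤ)) = 0 := by
      linear_combination -h
    rcases mul_eq_zero.mp h2 with h3 | h3
    · exact h3
    · exact absurd h3 hne
  have hfstlam : (Phi n ⟨n - 1, by omega⟩ lam).fst = 0 := by
    have h := congrArg (fun F : LaurentRing n →ₐ[ℤ] ℤ => F lam)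
      (fst_comp_Phi n ⟨n - 1, by omega⟩ ⟨1, by omega⟩)
    simp only [AlgHom.comp_apply] at h
    rw [hD1lam, map_zero] at h
    exact h
  have hsm : ∀ x : ℤ, x • (DualNumber.eps : DualNumber ℤ) = TrivSqZeroExt.inr x := fun x => by
    apply TrivSqZeroExt.ext
    · rw [TrivSqZeroExt.fst_smul, TrivSqZeroExt.fst_inr,
        show (DualNumber.eps : DualNumber ℤ) = TrivSqZeroExt.inr (1 : ℤ) from rfl,
        TrivSqZeroExt.fst_inr, smul_zero]
    · rw [TrivSqZeroExt.snd_smul, TrivSqZeroExt.snd_inr,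
        show (DualNumber.eps : DualNumber ℤ) = TrivSqZeroExt.inr (1 : ℤ) from rfl,
        TrivSqZeroExt.snd_inr, smul_eq_mul, mul_one]
  have hmlast : m ⟨n - 1, by omega⟩ = 0 := by
    have h := congrArg (Phi n ⟨n - 1, by omega⟩) hI
    rw [map_sub, map_mul, map_sub, map_one, sMonomial, Phi_single, sVar, Phi_single,
      Finsupp.single_apply, if_pos rfl] at h
    rw [add_sub_cancel_left, add_sub_cancel_left, hsm, hsm] at h
    have hmul : Phi n ⟨n - 1, by omega⟩ lam * TrivSqZeroExt.inr (1 : ℤ)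
        = TrivSqZeroExt.inr ((Phi n ⟨n - 1, by omega⟩ lam).fst : ℤ) := by
      conv_lhs => rw [← TrivSqZeroExt.inl_fst_add_inr_snd_eq (Phi n ⟨n - 1, by omega⟩ lam)]
      rw [add_mul, TrivSqZeroExt.inl_mul_inr, TrivSqZeroExt.inr_mul_inr, add_zero,
        smul_eq_mul, mul_one]
    rw [hmul, hfstlam] at h
    have := TrivSqZeroExt.inr_injective h
    simpa using this
  have hmo : ∀ i : Fin n, (⟨n - 1, by omega⟩ : Fin n) ≠ i → m i = 0 := fun i hi => by
    have h := congrArg (Dhom n i) hI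
    rw [map_sub, map_mul, map_sub, map_one, sMonomial, Dhom_single, hDsvar,
      if_neg hi, ← AddMonoidAlgebra.one_def, sub_self, mul_zero, sub_eq_zero,
      AddMonoidAlgebra.one_def] at h
    rcases AddMonoidAlgebra.single_inj.mp h with ⟨h1, -⟩ | ⟨-, h1⟩
    · exact h1
    · exact absurd h1 one_ne_zero
  have hm0 : m = 0 := by
    ext i
    rw [Finsupp.coe_zero, Pi.zero_apply]
    by_cases hi : (⟨n - 1, by omega⟩ : Fin n) = i
    · rw [← hi]; exact hmlast
    · exact hmo i hi
  have hsne : (sVar n (⟨n - 1, by omega⟩ : Fin n) - 1 : LaurentRing n) ≠ 0 := by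
    intro hcon
    have h1 : sVar n (⟨n - 1, by omega⟩ : Fin n)
        = AddMonoidAlgebra.single (0 : Fin n →₀ ℤ) (1 : ℤ) := by
      rw [← AddMonoidAlgebra.one_def]
      exact sub_eq_zero.mp hcon
    rw [sVar] at h1
    rcases AddMonoidAlgebra.single_inj.mp h1 with ⟨h2, -⟩ | ⟨h2, -⟩
    · exact one_ne_zero (Finsupp.single_eq_zero.mp h2)
    · exact one_ne_zero h2
  have hlam0 : lam = 0 := by
    have h : lam * (sVar n ⟨n - 1, by omega⟩ - 1) = 0 := by
      rw [hm0, sMonomial_zero] at hI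
      linear_combination -hI
    rcases mul_eq_zero.mp h with h3 | h3
    · exact h3
    · exact absurd h3 hsne
  have hc0 : ∀ k : Fin n, c k = 0 := by
    intro k
    by_cases hk : (k : ℕ) < n - 1
    · have h := hkey k
      rw [if_pos hk, hlam0, zero_mul, add_zero] at h
      have h2 : (sVar n ⟨n - 1, by omega⟩ - 1) * c k = 0 := by linear_combination -h
      rcases mul_eq_zero.mp h2 with h3 | h3
      · exact absurd h3 hsne
      · exact h3
    · have hkl : k = ⟨n - 1, by omega⟩ := by
        apply Fin.ext
        have := k.isLt
        simp only
        omega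
      rw [hkl, heqlast, hlam0]
  have hb0 : b = 0 := by
    rw [hbsum]
    rw [Finset.sum_congr rfl (fun j (_ : j ∈ Finset.univ) => by
      rw [show coeff (Finsupp.single j 1) b = c j from rfl, hc0 j, map_zero, zero_mul])]
    simp
  rw [Matrix.eta_fin_two (Magnus n g : Matrix (Fin 2) (Fin 2) (MagnusRing n)),
    h00, h10, h11, ← hbdef, hb0, hm0, sMonomial_zero, map_one]
  exact (Matrix.one_fin_two).symm
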